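/- Let (X,Y) be a source with X binary and define the source Bhattacharyya parameter Z(X|Y) = 2·Σ_y P_Y(y)·√(P_{X|Y}(0|y)·P_{X|Y}(1|y)). If (X₁,Y₁),(X₂,Y₂) are two independent copies of (X,Y), then Z(X₁ ⊕ X₂ | Y₁,Y₂) ≤ 2·Z(X|Y) − Z(X|Y)². -/
import Mathlib
set_option maxHeartbeats 800000


/-- Conditional source Bhattacharyya parameter
`Z(X|W) = 2 Σ_w P_W(w) √(P_{X|W}(0|w) P_{X|W}(1|w)) = 2 Σ_w √(q(0,w) q(1,w))`
for a joint pmf `q x w` with binary `x`. -/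
noncomputable def bhat {β : Type*} (q : Bool → β → ℝ) : ℝ :=
  2 * ∑' w : β, Real.sqrt (q false w * q true w)

private lemma bhat_key (x0 x1 z0 z1 : ℝ) (hx0 : 0 ≤ x0) (hx1 : 0 ≤ x1) (hz0 : 0 ≤ z0)
    (hz1 : 0 ≤ z1) :
    Real.sqrt ((x0*z0 + x1*z1) * (x1*z0 + x0*z1)) ≤
      Real.sqrt (x0*x1) * ((z0+z1) - Real.sqrt (z0*z1))
      + ((x0+x1) - Real.sqrt (x0*x1)) * Real.sqrt (z0*z1) := by
  set u := Real.sqrt (x0*x1) with hu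
  set v := Real.sqrt (z0*z1) with hv
  have hu0 : 0 ≤ u := Real.sqrt_nonneg _
  have hv0 : 0 ≤ v := Real.sqrt_nonneg _
  have hu2 : u^2 = x0*x1 := Real.sq_sqrt (mul_nonneg hx0 hx1)
  have hv2 : v^2 = z0*z1 := Real.sq_sqrt (mul_nonneg hz0 hz1)
  have hamx : 2*u ≤ x0 + x1 := by
    nlinarith [sq_nonneg (Real.sqrt x0 - Real.sqrt x1), Real.sq_sqrt hx0, Real.sq_sqrt hx1,
      Real.sqrt_mul hx0 x1, Real.sqrt_nonneg x0, Real.sqrt_nonneg x1]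
  have hamz : 2*v ≤ z0 + z1 := by
    nlinarith [sq_nonneg (Real.sqrt z0 - Real.sqrt z1), Real.sq_sqrt hz0, Real.sq_sqrt hz1,
      Real.sqrt_mul hz0 z1, Real.sqrt_nonneg z0, Real.sqrt_nonneg z1]
  have hR0 : 0 ≤ u * ((z0+z1) - v) + ((x0+x1) - u) * v := by
    nlinarith [mul_nonneg hu0 (by linarith : (0:ℝ) ≤ z0+z1-2*v),
      mul_nonneg hv0 (by linarith : (0:ℝ) ≤ x0+x1-u)]
  have hid : (u * ((z0+z1) - v) + ((x0+x1) - u) * v)^2 - (x0*z0 + x1*z1) * (x1*z0 + x0*z1)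
      = 2*u*v*(x0+x1-2*u)*(z0+z1-2*v) := by
    linear_combination ((z0+z1)^2 - 4*v^2) * hu2 + (x0-x1)^2 * hv2
  have hsq : (x0*z0 + x1*z1) * (x1*z0 + x0*z1) ≤ (u * ((z0+z1) - v) + ((x0+x1) - u) * v)^2 := by
    nlinarith [hid, mul_nonneg (mul_nonneg (mul_nonneg hu0 hv0)
      (by linarith : (0:ℝ) ≤ x0+x1-2*u)) (by linarith : (0:ℝ) ≤ z0+z1-2*v)]
  calc Real.sqrt ((x0*z0 + x1*z1) * (x1*z0 + x0*z1))
      ≤ Real.sqrt ((u * ((z0+z1) - v) + ((x0+x1) - u) * v)^2) := Real.sqrt_le_sqrt hsq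
    _ = u * ((z0+z1) - v) + ((x0+x1) - u) * v := Real.sqrt_sq hR0

/-- `Z(X₁ ⊕ X₂ | Y₁,Y₂) ≤ 2 Z(X|Y) − Z(X|Y)²`. -/
theorem stmt3 (p : Bool → ℕ → ℝ) (hp : ∀ x y, 0 ≤ p x y)
    (hsum : HasSum (fun z : Bool × ℕ => p z.1 z.2) 1) :
    bhat (fun (u₁ : Bool) (y : ℕ × ℕ) =>
        ∑ x₂ : Bool, p (xor u₁ x₂) y.1 * p x₂ y.2) ≤
      2 * bhat p - (bhat p) ^ 2 := by
  classical
  set a : ℕ → ℝ := fun y => Real.sqrt (p false y * p true y) with ha_def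
  set s : ℕ → ℝ := fun y => p false y + p true y with hs_def
  have ha0 : ∀ y, 0 ≤ a y := fun y => Real.sqrt_nonneg _
  have has : ∀ y, a y ≤ s y := by
    intro y
    have h2 : 2 * Real.sqrt (p false y * p true y) ≤ p false y + p true y := by
      nlinarith [sq_nonneg (Real.sqrt (p false y) - Real.sqrt (p true y)),
        Real.sq_sqrt (hp false y), Real.sq_sqrt (hp true y),
        Real.sqrt_mul (hp false y) (p true y), Real.sqrt_nonneg (p false y),
        Real.sqrt_nonneg (p true y)]
    have h3 : (0:ℝ) ≤ Real.sqrt (p false y * p true y) := Real.sqrt_nonneg _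
    simp only [ha_def, hs_def]
    linarith
  -- HasSum of the marginal s
  have hswap : HasSum (fun z : ℕ × Bool => p z.2 z.1) 1 :=
    ((Equiv.prodComm ℕ Bool).hasSum_iff).mpr hsum
  have hS : HasSum s 1 := by
    refine hswap.prod_fiberwise (fun y => ?_)
    simpa [hs_def, add_comm] using hasSum_fintype (fun x : Bool => p x y)
  have hSsummable : Summable s := hS.summable
  have hasummable : Summable a :=
    Summable.of_nonneg_of_le ha0 has hSsummable
  set A : ℝ := ∑' y, a y with hA_def
  have hAhas : HasSum a A := hasummable.hasSum
  have hA0 : 0 ≤ A := tsum_nonneg ha0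
  set b : ℕ → ℝ := fun y => s y - a y with hb_def
  have hb0 : ∀ y, 0 ≤ b y := fun y => sub_nonneg.mpr (has y)
  have hB : HasSum b (1 - A) := hS.sub hAhas
  have hbsummable : Summable b := hB.summable
  -- the bounding function F
  set F : ℕ × ℕ → ℝ := fun y => a y.1 * b y.2 + b y.1 * a y.2 with hF_def
  have hab_summ : Summable (fun y : ℕ × ℕ => a y.1 * b y.2) :=
    hasummable.mul_of_nonneg hbsummable ha0 hb0
  have hba_summ : Summable (fun y : ℕ × ℕ => b y.1 * a y.2) :=
    hbsummable.mul_of_nonneg hasummable hb0 ha0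
  have hFsummable : Summable F := hab_summ.add hba_summ
  have hab_tsum : ∑' y : ℕ × ℕ, a y.1 * b y.2 = A * (1 - A) := by
    rw [Summable.tsum_prod' hab_summ (fun y1 => (hbsummable.mul_left (a y1)))]
    simp_rw [tsum_mul_left, hB.tsum_eq]
    rw [tsum_mul_right, ← hA_def]
  have hba_tsum : ∑' y : ℕ × ℕ, b y.1 * a y.2 = (1 - A) * A := by
    rw [Summable.tsum_prod' hba_summ (fun y1 => (hasummable.mul_left (b y1)))]
    simp_rw [tsum_mul_left, hAhas.tsum_eq]
    rw [tsum_mul_right, hB.tsum_eq]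
  have hFtsum : ∑' y, F y = A * (1 - A) + (1 - A) * A := by
    rw [hF_def]
    rw [Summable.tsum_add hab_summ hba_summ, hab_tsum, hba_tsum]
  -- the pointwise bound
  have hpt : ∀ y : ℕ × ℕ,
      Real.sqrt ((∑ x₂ : Bool, p (xor false x₂) y.1 * p x₂ y.2) *
        (∑ x₂ : Bool, p (xor true x₂) y.1 * p x₂ y.2)) ≤ F y := by
    intro y
    have := bhat_key (p false y.1) (p true y.1) (p false y.2) (p true y.2)
      (hp _ _) (hp _ _) (hp _ _) (hp _ _)
    simp only [Fintype.sum_bool, Bool.xor_false, Bool.xor_true, Bool.not_true, Bool.not_false]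
    calc Real.sqrt ((p true y.1 * p true y.2 + p false y.1 * p false y.2) *
          (p false y.1 * p true y.2 + p true y.1 * p false y.2))
        = Real.sqrt ((p false y.1 * p false y.2 + p true y.1 * p true y.2) *
          (p true y.1 * p false y.2 + p false y.1 * p true y.2)) := by
            congr 1
            try ring
      _ ≤ _ := this
      _ = F y := by
          simp only [hF_def, ha_def, hb_def, hs_def]
          try ring
  have hqsumm : Summable (fun y : ℕ × ℕ =>
      Real.sqrt ((∑ x₂ : Bool, p (xor false x₂) y.1 * p x₂ y.2) *
        (∑ x₂ : Bool, p (xor true x₂) y.1 * p x₂ y.2))) :=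
    Summable.of_nonneg_of_le (fun y => Real.sqrt_nonneg _) hpt hFsummable
  have hmain : (∑' y : ℕ × ℕ,
      Real.sqrt ((∑ x₂ : Bool, p (xor false x₂) y.1 * p x₂ y.2) *
        (∑ x₂ : Bool, p (xor true x₂) y.1 * p x₂ y.2))) ≤ A * (1 - A) + (1 - A) * A := by
    rw [← hFtsum]
    exact Summable.tsum_le_tsum hpt hqsumm hFsummable
  have hbp : bhat p = 2 * A := rfl
  simp only [bhat, hbp]
  nlinarith [hmain]
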